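/- Let (M,d) be a compact metric space with at least two points, X ⊂ M compact, and g : M → X measurable with d(x, g(x)) ≤ ε for all x ∈ M. Let π be a Borel probability measure on M and π_X = g_*π its pushforward. Then |F_{(M,d)}(π) − F_{(X,d)}(π_X)| ≤ 3ε/ν_{(M,d)}, where ν_{(M,d)} is the synchrony normalization constant of (M,d). -/

import Mathlib

open MeasureTheory

set_option linter.unusedSectionVars false

section Aux
variable {A : Type*} [MetricSpace A] [MeasurableSpace A] [BorelSpace A]

/-- bounded measurable functions are in L². -/
lemma memLp_two_of_bound {μ : Measure A} [IsFiniteMeasure μ] {v : A → ℝ} (hv : Measurable v)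
    {C : ℝ} (hb : ∀ x, |v x| ≤ C) : MemLp v 2 μ :=
  (memLp_top_of_bound hv.aestronglyMeasurable C
    (Filter.Eventually.of_forall hb)).mono_exponent le_top

lemma integrable_of_bound {μ : Measure A} [IsFiniteMeasure μ] {v : A → ℝ} (hv : Measurable v)
    {C : ℝ} (hb : ∀ x, |v x| ≤ C) : Integrable v μ :=
  memLp_one_iff_integrable.mp ((memLp_top_of_bound hv.aestronglyMeasurable C
    (Filter.Eventually.of_forall hb)).mono_exponent le_top)

lemma integral_le_sqrt_integral_sq {μ : Measure A} [IsProbabilityMeasure μ] {v : A → ℝ}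
    (hm : MemLp v 2 μ) : ∫ x, v x ∂μ ≤ Real.sqrt (∫ x, v x ^ 2 ∂μ) := by
  have h := ProbabilityTheory.variance_nonneg v μ
  rw [ProbabilityTheory.variance_eq_sub hm] at h
  have h2 : (∫ x, v x ∂μ) ^ 2 ≤ ∫ x, v x ^ 2 ∂μ := by
    simpa [Pi.pow_apply] using h
  calc ∫ x, v x ∂μ ≤ |∫ x, v x ∂μ| := le_abs_self _
    _ = Real.sqrt ((∫ x, v x ∂μ) ^ 2) := (Real.sqrt_sq_eq_abs _).symm
    _ ≤ Real.sqrt (∫ x, v x ^ 2 ∂μ) := Real.sqrt_le_sqrt h2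

/-- L²-Minkowski-type estimate with a constant perturbation. -/
lemma sqrt_integral_sq_le {μ : Measure A} [IsProbabilityMeasure μ] {u v : A → ℝ}
    (hu : Measurable u) (hv : Measurable v) (hu0 : ∀ x, 0 ≤ u x) (hv0 : ∀ x, 0 ≤ v x)
    {C : ℝ} (hub : ∀ x, u x ≤ C) (hvb : ∀ x, v x ≤ C) {c : ℝ} (hc : 0 ≤ c)
    (h : ∀ x, u x ≤ v x + c) :
    Real.sqrt (∫ x, u x ^ 2 ∂μ) ≤ Real.sqrt (∫ x, v x ^ 2 ∂μ) + c := by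
  have habs : ∀ (w : A → ℝ), (∀ x, 0 ≤ w x) → (∀ x, w x ≤ C) → ∀ x, |w x| ≤ C := by
    intro w h0 hb x; rw [abs_of_nonneg (h0 x)]; exact hb x
  have hvm : MemLp v 2 μ := memLp_two_of_bound hv (habs v hv0 hvb)
  have hvint : Integrable v μ := integrable_of_bound hv (habs v hv0 hvb)
  have hv2int : Integrable (fun x => v x ^ 2) μ := by
    refine integrable_of_bound (hv.pow_const 2) (C := C ^ 2) ?_
    intro x; rw [abs_of_nonneg (by positivity)]
    exact pow_le_pow_left₀ (hv0 x) (hvb x) 2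
  have hu2int : Integrable (fun x => u x ^ 2) μ := by
    refine integrable_of_bound (hu.pow_const 2) (C := C ^ 2) ?_
    intro x; rw [abs_of_nonneg (by positivity)]
    exact pow_le_pow_left₀ (hu0 x) (hub x) 2
  have hEv2 : 0 ≤ ∫ x, v x ^ 2 ∂μ := integral_nonneg fun x => by positivity
  set S : ℝ := Real.sqrt (∫ x, v x ^ 2 ∂μ) with hS
  have hS0 : 0 ≤ S := Real.sqrt_nonneg _
  have hS2 : S ^ 2 = ∫ x, v x ^ 2 ∂μ := Real.sq_sqrt hEv2
  have hCS : ∫ x, v x ∂μ ≤ S := integral_le_sqrt_integral_sq hvm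
  have hv0' : 0 ≤ ∫ x, v x ∂μ := integral_nonneg hv0
  have key : ∫ x, u x ^ 2 ∂μ ≤ (S + c) ^ 2 := by
    have h1 : ∫ x, u x ^ 2 ∂μ ≤ ∫ x, (v x ^ 2 + (2 * c * v x + c ^ 2)) ∂μ := by
      have hrest : Integrable (fun x => 2 * c * v x + c ^ 2) μ := by
        exact (hvint.const_mul (2 * c)).add (integrable_const (c ^ 2))
      refine integral_mono hu2int (hv2int.add hrest) fun x => ?_
      have := h x
      nlinarith [hu0 x, hv0 x]
    have hrest : Integrable (fun x => 2 * c * v x + c ^ 2) μ := by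
      exact (hvint.const_mul (2 * c)).add (integrable_const (c ^ 2))
    have hcm : Integrable (fun x => 2 * c * v x) μ := hvint.const_mul (2 * c)
    have h2 : ∫ x, (v x ^ 2 + (2 * c * v x + c ^ 2)) ∂μ
        = (∫ x, v x ^ 2 ∂μ) + (2 * c * ∫ x, v x ∂μ + c ^ 2) := by
      rw [integral_add hv2int hrest, integral_add hcm (integrable_const (c ^ 2)),
        integral_const_mul, integral_const]
      simp
    nlinarith
  calc Real.sqrt (∫ x, u x ^ 2 ∂μ) ≤ Real.sqrt ((S + c) ^ 2) := Real.sqrt_le_sqrt key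
    _ = S + c := Real.sqrt_sq (by positivity)

/-- the quantity `V(μ) = W₂(μ, δ_·)` minimized over base points. -/
noncomputable def syncV (μ : Measure A) : ℝ :=
  ⨅ α : A, Real.sqrt (∫ x, dist x α ^ 2 ∂μ)

/-- the synchrony normalization constant `ν`. -/
noncomputable def syncNu (A : Type*) [MetricSpace A] [MeasurableSpace A] : ℝ :=
  ⨆ μ : ProbabilityMeasure A, ⨅ α : A, Real.sqrt (∫ x, dist x α ^ 2 ∂(μ : Measure A))

variable [CompactSpace A] [Nonempty A]

lemma dist_le_diam' (x α : A) : dist x α ≤ Metric.diam (Set.univ : Set A) :=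
  Metric.dist_le_diam_of_mem isCompact_univ.isBounded trivial trivial

lemma integrable_distSq (μ : Measure A) [IsFiniteMeasure μ] (α : A) :
    Integrable (fun x => dist x α ^ 2) μ := by
  refine integrable_of_bound ((continuous_id.dist continuous_const).measurable.pow_const 2)
    (C := Metric.diam (Set.univ : Set A) ^ 2) fun x => ?_
  rw [abs_of_nonneg (by positivity)]
  exact pow_le_pow_left₀ dist_nonneg (dist_le_diam' x α) 2

lemma syncV_nonneg (μ : Measure A) : 0 ≤ syncV μ :=
  le_ciInf fun _ => Real.sqrt_nonneg _

lemma bddBelow_syncV (μ : Measure A) :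
    BddBelow (Set.range fun α : A => Real.sqrt (∫ x, dist x α ^ 2 ∂μ)) := by
  refine ⟨0, ?_⟩; rintro _ ⟨α, rfl⟩; exact Real.sqrt_nonneg _

lemma syncV_le (μ : Measure A) (α : A) :
    syncV μ ≤ Real.sqrt (∫ x, dist x α ^ 2 ∂μ) :=
  ciInf_le (bddBelow_syncV μ) α

lemma syncV_le_diam (μ : Measure A) [IsProbabilityMeasure μ] :
    syncV μ ≤ Metric.diam (Set.univ : Set A) := by
  obtain ⟨α⟩ := ‹Nonempty A›
  refine (syncV_le μ α).trans ?_
  have h1 : ∫ x, dist x α ^ 2 ∂μ ≤ ∫ _x, Metric.diam (Set.univ : Set A) ^ 2 ∂μ := by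
    refine integral_mono (integrable_distSq μ α) (integrable_const _) fun x => ?_
    exact pow_le_pow_left₀ dist_nonneg (dist_le_diam' x α) 2
  have h2 : ∫ _x, Metric.diam (Set.univ : Set A) ^ 2 ∂μ
      = Metric.diam (Set.univ : Set A) ^ 2 := by simp
  calc Real.sqrt (∫ x, dist x α ^ 2 ∂μ) ≤ Real.sqrt (Metric.diam (Set.univ : Set A) ^ 2) :=
        Real.sqrt_le_sqrt (h1.trans_eq h2)
    _ = Metric.diam (Set.univ : Set A) := Real.sqrt_sq Metric.diam_nonneg

lemma bddAbove_syncV :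
    BddAbove (Set.range fun μ : ProbabilityMeasure A => syncV (μ : Measure A)) := by
  refine ⟨Metric.diam (Set.univ : Set A), ?_⟩
  rintro _ ⟨μ, rfl⟩; exact syncV_le_diam _

lemma syncV_le_nu (μ : ProbabilityMeasure A) : syncV (μ : Measure A) ≤ syncNu A :=
  le_ciSup (f := fun μ : ProbabilityMeasure A => syncV (μ : Measure A)) bddAbove_syncV μ

lemma syncNu_nonneg [BorelSpace A] : 0 ≤ syncNu A := by
  obtain ⟨α⟩ := ‹Nonempty A›
  exact (syncV_nonneg _).trans
    (syncV_le_nu (⟨Measure.dirac α, inferInstance⟩ : ProbabilityMeasure A))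

lemma syncNu_pos (h : ∃ x y : A, x ≠ y) : 0 < syncNu A := by
  obtain ⟨x, y, hxy⟩ := h
  set μ0 : Measure A := (2⁻¹ : ENNReal) • Measure.dirac x + (2⁻¹ : ENNReal) • Measure.dirac y
    with hμ0
  have hprob : IsProbabilityMeasure μ0 := by
    constructor
    simp [hμ0]
    rw [← ENNReal.inv_two_add_inv_two]
  have key : ∀ α : A, dist x y / 2 ≤ Real.sqrt (∫ z, dist z α ^ 2 ∂μ0) := by
    intro α
    have hm : Measurable fun z : A => dist z α ^ 2 :=
      (continuous_id.dist continuous_const).measurable.pow_const 2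
    have hix : Integrable (fun z : A => dist z α ^ 2) ((2⁻¹ : ENNReal) • Measure.dirac x) :=
      (integrable_distSq _ α).smul_measure (by simp)
    have hiy : Integrable (fun z : A => dist z α ^ 2) ((2⁻¹ : ENNReal) • Measure.dirac y) :=
      (integrable_distSq _ α).smul_measure (by simp)
    have hval : ∫ z, dist z α ^ 2 ∂μ0
        = (2⁻¹ : ENNReal).toReal * dist x α ^ 2 + (2⁻¹ : ENNReal).toReal * dist y α ^ 2 := by
      rw [hμ0, integral_add_measure hix hiy, integral_smul_measure, integral_smul_measure,
        integral_dirac, integral_dirac]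
      simp
    have htr : (2⁻¹ : ENNReal).toReal = (2⁻¹ : ℝ) := by simp
    refine Real.le_sqrt_of_sq_le ?_
    rw [hval, htr]
    have htri := dist_triangle x α y
    rw [dist_comm α y] at htri
    nlinarith [htri, sq_nonneg (dist x α - dist y α), dist_nonneg (x := x) (y := y)]
  have h1 : dist x y / 2 ≤ syncV μ0 := le_ciInf key
  have h2 : syncV μ0 ≤ syncNu A :=
    syncV_le_nu (⟨μ0, hprob⟩ : ProbabilityMeasure A)
  have h3 : 0 < dist x y := dist_pos.mpr hxy
  linarith

end Aux

/-- Approximation of synchrony: if every point of M is within ε of its observed state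
g(x) ∈ X, then the synchrony of π on M and of the pushforward g_*π on X differ by at
most 3ε/ν_{(M,d)}. -/
theorem synchrony_approximation {M : Type*} [MetricSpace M] [CompactSpace M]
    [MeasurableSpace M] [BorelSpace M] (hM : ∃ x y : M, x ≠ y)
    (X : Set M) (hX : IsCompact X) (g : M → X) (hg : Measurable g)
    (ε : ℝ) (hε : 0 ≤ ε) (hgd : ∀ x : M, dist x (g x : M) ≤ ε)
    (π : Measure M) [IsProbabilityMeasure π] :
    |(1 - (⨅ α : M, Real.sqrt (∫ x, dist x α ^ 2 ∂π)) /
          (⨆ μ : ProbabilityMeasure M,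
            ⨅ α : M, Real.sqrt (∫ x, dist x α ^ 2 ∂(μ : Measure M))))
      - (1 - (⨅ α : X, Real.sqrt (∫ y, dist y α ^ 2 ∂(Measure.map g π))) /
          (⨆ μ : ProbabilityMeasure X,
            ⨅ α : X, Real.sqrt (∫ y, dist y α ^ 2 ∂(μ : Measure X))))|
      ≤ 3 * ε / (⨆ μ : ProbabilityMeasure M,
          ⨅ α : M, Real.sqrt (∫ x, dist x α ^ 2 ∂(μ : Measure M))) := by
  haveI : Nonempty M := ⟨hM.choose⟩
  haveI : CompactSpace ↥X := isCompact_iff_compactSpace.mp hX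
  haveI : Nonempty ↥X := ⟨g (Classical.arbitrary M)⟩
  haveI hπX : IsProbabilityMeasure (Measure.map g π) :=
    Measure.isProbabilityMeasure_map hg.aemeasurable
  set D : ℝ := Metric.diam (Set.univ : Set M) with hD
  have hdb : ∀ z w : M, dist z w ≤ D := fun z w =>
    Metric.dist_le_diam_of_mem isCompact_univ.isBounded trivial trivial
  -- integral conversion along the pushforward by g
  have hmap : ∀ (μ : Measure M) (α : ↥X), ∫ y, dist y α ^ 2 ∂(Measure.map g μ)
      = ∫ x, dist (g x : M) (α : M) ^ 2 ∂μ := by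
    intro μ α
    have hsm : AEStronglyMeasurable (fun y : ↥X => dist y α ^ 2) (Measure.map g μ) :=
      Continuous.aestronglyMeasurable (by fun_prop)
    rw [integral_map hg.aemeasurable hsm]
    simp_rw [Subtype.dist_eq]
  -- integral conversion along the pushforward by the inclusion
  have hmapi : ∀ (μ' : Measure ↥X) (α : M),
      ∫ z, dist z α ^ 2 ∂(Measure.map (Subtype.val : ↥X → M) μ')
        = ∫ y : ↥X, dist (y : M) α ^ 2 ∂μ' := by
    intro μ' α
    have hsm : AEStronglyMeasurable (fun z : M => dist z α ^ 2)
        (Measure.map (Subtype.val : ↥X → M) μ') :=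
      Continuous.aestronglyMeasurable (by fun_prop)
    rw [integral_map measurable_subtype_coe.aemeasurable hsm]
  -- comparison of V along g
  have hcomp1 : ∀ (μ : Measure M), IsProbabilityMeasure μ →
      syncV μ ≤ syncV (Measure.map g μ) + ε := by
    intro μ hμ
    rw [← sub_le_iff_le_add]
    refine le_ciInf fun α : ↥X => ?_
    rw [hmap μ α, sub_le_iff_le_add]
    refine (syncV_le μ (α : M)).trans ?_
    refine sqrt_integral_sq_le (C := D)
      ((continuous_id.dist continuous_const).measurable)
      (((continuous_id.dist continuous_const).measurable).comp
        (measurable_subtype_coe.comp hg))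
      (fun x => dist_nonneg) (fun x => dist_nonneg)
      (fun x => hdb _ _) (fun x => hdb _ _) hε fun x => ?_
    calc dist x (α : M) ≤ dist x (g x : M) + dist (g x : M) (α : M) := dist_triangle _ _ _
      _ ≤ dist (g x : M) (α : M) + ε := by linarith [hgd x]
  have hcomp2 : ∀ (μ : Measure M), IsProbabilityMeasure μ →
      syncV (Measure.map g μ) ≤ syncV μ + 2 * ε := by
    intro μ hμ
    rw [← sub_le_iff_le_add]
    refine le_ciInf fun α : M => ?_
    rw [sub_le_iff_le_add]
    refine (syncV_le (Measure.map g μ) (g α)).trans ?_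
    rw [hmap μ (g α)]
    refine sqrt_integral_sq_le (C := D)
      (((continuous_id.dist continuous_const).measurable).comp
        (measurable_subtype_coe.comp hg))
      ((continuous_id.dist continuous_const).measurable)
      (fun x => dist_nonneg) (fun x => dist_nonneg)
      (fun x => hdb _ _) (fun x => hdb _ _) (by linarith) fun x => ?_
    calc dist (g x : M) (g α : M)
        ≤ dist (g x : M) x + (dist x α + dist α (g α : M)) :=
          (dist_triangle _ x _).trans (by linarith [dist_triangle x α (g α : M)])
      _ ≤ dist x α + 2 * ε := by
          have h1 := hgd x; have h2 := hgd α
          rw [dist_comm (g x : M) x]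
          linarith
  -- comparison of V along the inclusion
  have hcomp3 : ∀ (μ' : Measure ↥X), IsProbabilityMeasure μ' →
      syncV μ' ≤ syncV (Measure.map (Subtype.val : ↥X → M) μ') + ε := by
    intro μ' hμ'
    rw [← sub_le_iff_le_add]
    refine le_ciInf fun α : M => ?_
    rw [hmapi μ' α, sub_le_iff_le_add]
    refine (syncV_le μ' (g α)).trans ?_
    have hre : ∫ y : ↥X, dist y (g α) ^ 2 ∂μ'
        = ∫ y : ↥X, dist (y : M) (g α : M) ^ 2 ∂μ' := by
      simp_rw [Subtype.dist_eq]
    rw [hre]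
    refine sqrt_integral_sq_le (C := D)
      ((continuous_subtype_val.dist continuous_const).measurable)
      ((continuous_subtype_val.dist continuous_const).measurable)
      (fun y => dist_nonneg) (fun y => dist_nonneg)
      (fun y => hdb _ _) (fun y => hdb _ _) hε fun y => ?_
    calc dist (y : M) (g α : M) ≤ dist (y : M) α + dist α (g α : M) := dist_triangle _ _ _
      _ ≤ dist (y : M) α + ε := by linarith [hgd α]
  -- abbreviations
  rw [show (⨅ α : M, Real.sqrt (∫ x, dist x α ^ 2 ∂π)) = syncV π from rfl,
    show (⨆ μ : ProbabilityMeasure M,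
      ⨅ α : M, Real.sqrt (∫ x, dist x α ^ 2 ∂(μ : Measure M))) = syncNu M from rfl,
    show (⨅ α : X, Real.sqrt (∫ y, dist y α ^ 2 ∂(Measure.map g π)))
      = syncV (Measure.map g π) from rfl,
    show (⨆ μ : ProbabilityMeasure X,
      ⨅ α : X, Real.sqrt (∫ y, dist y α ^ 2 ∂(μ : Measure X))) = syncNu ↥X from rfl]
  set a : ℝ := syncV π with ha
  set b : ℝ := syncV (Measure.map g π) with hb
  set s : ℝ := syncNu M with hsdef
  set t : ℝ := syncNu ↥X with htdef
  have ha0 : 0 ≤ a := syncV_nonneg _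
  have hb0 : 0 ≤ b := syncV_nonneg _
  have has : a ≤ s := syncV_le_nu (⟨π, inferInstance⟩ : ProbabilityMeasure M)
  have hbt : b ≤ t := syncV_le_nu (⟨Measure.map g π, hπX⟩ : ProbabilityMeasure ↥X)
  have hab1 : a ≤ b + ε := hcomp1 π inferInstance
  have hab2 : b ≤ a + 2 * ε := hcomp2 π inferInstance
  haveI : Nonempty (ProbabilityMeasure M) :=
    ⟨⟨Measure.dirac (Classical.arbitrary M), inferInstance⟩⟩
  haveI : Nonempty (ProbabilityMeasure ↥X) :=
    ⟨⟨Measure.dirac (Classical.arbitrary ↥X), inferInstance⟩⟩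
  have hst1 : s ≤ t + ε := by
    refine ciSup_le fun μ => ?_
    refine (hcomp1 (μ : Measure M) inferInstance).trans (add_le_add_left ?_ ε)
    exact syncV_le_nu (⟨Measure.map g (μ : Measure M),
      Measure.isProbabilityMeasure_map hg.aemeasurable⟩ : ProbabilityMeasure ↥X)
  have hst2 : t ≤ s + ε := by
    refine ciSup_le fun μ' => ?_
    refine (hcomp3 (μ' : Measure ↥X) inferInstance).trans (add_le_add_left ?_ ε)
    exact syncV_le_nu (⟨Measure.map (Subtype.val : ↥X → M) (μ' : Measure ↥X),
      Measure.isProbabilityMeasure_map measurable_subtype_coe.aemeasurable⟩ : ProbabilityMeasure M)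
  have hs : 0 < s := syncNu_pos hM
  have ht0 : 0 ≤ t := hb0.trans hbt
  -- final arithmetic
  rw [show (1 - a / s) - (1 - b / t) = b / t - a / s from by ring]
  rcases eq_or_lt_of_le ht0 with hteq | ht
  · have hbz : b = 0 := le_antisymm (hbt.trans hteq.symm.le) hb0
    have hbt0 : b / t = 0 := by rw [hbz, zero_div]
    rw [hbt0, zero_sub, abs_neg, abs_of_nonneg (by positivity)]
    rw [div_le_div_iff₀ hs hs]
    nlinarith
  · rw [abs_le]
    have h1 : b / t ≤ (a + 3 * ε) / s := by
      rw [div_le_div_iff₀ ht hs]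
      nlinarith [mul_le_mul_of_nonneg_left hst1 hb0, mul_le_mul_of_nonneg_right hab2 ht.le,
        mul_le_mul_of_nonneg_right hbt hε]
    have h2 : (a - 3 * ε) / s ≤ b / t := by
      rw [div_le_div_iff₀ hs ht]
      nlinarith [mul_le_mul_of_nonneg_right hab1 ht.le, mul_le_mul_of_nonneg_left hst2 hb0,
        mul_le_mul_of_nonneg_right hbt hε]
    rw [add_div] at h1
    rw [sub_div] at h2
    constructor <;> [linarith; linarith]
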